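/- arXiv:2208.11156 — 4 statements merged into one kernel-verified Lean document; each statement's English description precedes it below -/
import Mathlib

section
/- Let P be a finite poset, and let K be a (not necessarily commutative) ring. For each v ∈ P, define the toggle Tᵥ as the partial map on K-labelings f : P̂ → K that replaces the label f(v) by (Σ_{u ⋖ v in P̂} f(u)) · f(v)⁻¹ · (Σ_{u ⋗ v in P̂} f(u)⁻¹)⁻¹ and leaves all other labels unchanged (undefined if any required inverse fails to exist). If v, w ∈ P satisfy neither v ⋖ w nor w ⋖ v, then Tᵥ ∘ T_w = T_w ∘ Tᵥ as partial maps. -/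
open scoped Classical


instance {α : Type*} [Fintype α] : Fintype (WithTop α) :=
  inferInstanceAs (Fintype (Option α))

instance {α : Type*} [Fintype α] : Fintype (WithBot α) :=
  inferInstanceAs (Fintype (Option α))

/-- The poset `P` with an adjoined global minimum `⊥` (called `0` in the paper) and an
adjoined global maximum `⊤` (called `1` in the paper). -/
abbrev PHat (P : Type*) := WithBot (WithTop P)

/-- The embedding of `P` into `PHat P`. -/
def toPHat {P : Type*} (v : P) : PHat P := ((v : WithTop P) : WithBot (WithTop P))

/-- The birational toggle `T_v` at an element `v ∈ P`, as a partial map (modelled via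
`Option`) on `K`-labelings `f : PHat P → K`.  It replaces the label at `v` by
`(∑_{u ⋖ v} f u) * (f v)⁻¹ * (∑_{u ⋗ v} (f u)⁻¹)⁻¹` and leaves all other labels unchanged;
it is undefined (`none`) whenever any of the required inverses fails to exist. -/
noncomputable def toggle {P : Type*} [PartialOrder P] [Fintype P] {K : Type*} [Ring K]
    (v : P) (f : PHat P → K) : Option (PHat P → K) :=
  if IsUnit (f (toPHat v)) ∧ (∀ u : PHat P, toPHat v ⋖ u → IsUnit (f u)) ∧
      IsUnit (∑ u ∈ Finset.univ.filter (fun u : PHat P => toPHat v ⋖ u), Ring.inverse (f u))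
  then some (Function.update f (toPHat v)
      ((∑ u ∈ Finset.univ.filter (fun u : PHat P => u ⋖ toPHat v), f u) *
        Ring.inverse (f (toPHat v)) *
        Ring.inverse
          (∑ u ∈ Finset.univ.filter (fun u : PHat P => toPHat v ⋖ u), Ring.inverse (f u))))
  else none

/-- `toggleList [v₁, …, vₘ] = T_{v₁} ∘ T_{v₂} ∘ ⋯ ∘ T_{vₘ}` as a partial map
(`T_{vₘ}` is applied first); `⊥ = none` propagates through the composition. -/
noncomputable def toggleList {P : Type*} [PartialOrder P] [Fintype P] {K : Type*} [Ring K] :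
    List P → (PHat P → K) → Option (PHat P → K)
  | [], f => some f
  | v :: L, f => (toggleList L f).bind (toggle v)

/-- `rowIter L n` is the `n`-fold iteration `R^n` of birational rowmotion
`R = toggleList L` (for `L` a linear extension of `P`), as a partial map. -/
noncomputable def rowIter {P : Type*} [PartialOrder P] [Fintype P] {K : Type*} [Ring K]
    (L : List P) : ℕ → (PHat P → K) → Option (PHat P → K)
  | 0, f => some f
  | n + 1, f => (toggleList L f).bind (rowIter L n)

/-- A linear extension of a poset `P`: a list of all elements of `P`, each occurring exactly
once, such that `vᵢ < vⱼ` in `P` implies `i < j`. -/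
def IsLinearExtension {P : Type*} [PartialOrder P] (L : List P) : Prop :=
  L.Nodup ∧ (∀ v : P, v ∈ L) ∧ L.Pairwise fun a b => ¬ b < a


section Aux
variable {P : Type*} [PartialOrder P] [Fintype P] {K : Type*} [Ring K]

lemma toPHat_injective : Function.Injective (toPHat (P := P)) := by
  intro a b h
  simpa [toPHat] using h

lemma toPHat_covBy_toPHat_iff {v w : P} : toPHat v ⋖ toPHat w ↔ v ⋖ w := by
  simp [toPHat]

lemma toggle_eq_some {v : P} {f g : PHat P → K} (h : toggle v f = some g) :
    ∃ x : K, g = Function.update f (toPHat v) x := by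
  rw [toggle] at h
  split_ifs at h
  exact ⟨_, (Option.some_injective _ h).symm⟩

lemma toggle_update {v w : P} (hvw : ¬ v ⋖ w) (hwv : ¬ w ⋖ v) (hne : v ≠ w)
    (f : PHat P → K) (x : K) :
    toggle v (Function.update f (toPHat w) x) =
      Option.map (fun g => Function.update g (toPHat w) x) (toggle v f) := by
  have hne' : toPHat v ≠ toPHat w := fun h => hne (toPHat_injective h)
  have h1 : Function.update f (toPHat w) x (toPHat v) = f (toPHat v) :=
    Function.update_of_ne hne' _ _
  have hup : ∀ u : PHat P, toPHat v ⋖ u → Function.update f (toPHat w) x u = f u := by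
    intro u hu
    apply Function.update_of_ne
    rintro rfl
    exact hvw (toPHat_covBy_toPHat_iff.mp hu)
  have hdown : ∀ u : PHat P, u ⋖ toPHat v → Function.update f (toPHat w) x u = f u := by
    intro u hu
    apply Function.update_of_ne
    rintro rfl
    exact hwv (toPHat_covBy_toPHat_iff.mp hu)
  have hsum1 : (∑ u ∈ Finset.univ.filter (fun u : PHat P => toPHat v ⋖ u),
      Ring.inverse (Function.update f (toPHat w) x u))
      = ∑ u ∈ Finset.univ.filter (fun u : PHat P => toPHat v ⋖ u), Ring.inverse (f u) :=
    Finset.sum_congr rfl fun u hu => by rw [hup u (Finset.mem_filter.mp hu).2]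
  have hsum0 : (∑ u ∈ Finset.univ.filter (fun u : PHat P => u ⋖ toPHat v),
      Function.update f (toPHat w) x u)
      = ∑ u ∈ Finset.univ.filter (fun u : PHat P => u ⋖ toPHat v), f u :=
    Finset.sum_congr rfl fun u hu => hdown u (Finset.mem_filter.mp hu).2
  have hiff : (IsUnit ((Function.update f (toPHat w) x) (toPHat v)) ∧
      (∀ u : PHat P, toPHat v ⋖ u → IsUnit ((Function.update f (toPHat w) x) u)) ∧
      IsUnit (∑ u ∈ Finset.univ.filter (fun u : PHat P => toPHat v ⋖ u),
        Ring.inverse ((Function.update f (toPHat w) x) u))) ↔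
      (IsUnit (f (toPHat v)) ∧ (∀ u : PHat P, toPHat v ⋖ u → IsUnit (f u)) ∧
      IsUnit (∑ u ∈ Finset.univ.filter (fun u : PHat P => toPHat v ⋖ u),
        Ring.inverse (f u))) := by
    rw [h1, hsum1]
    exact and_congr Iff.rfl (and_congr
      (forall_congr' fun u => imp_congr_right fun hu => by rw [hup u hu]) Iff.rfl)
  by_cases hc : IsUnit (f (toPHat v)) ∧ (∀ u : PHat P, toPHat v ⋖ u → IsUnit (f u)) ∧
      IsUnit (∑ u ∈ Finset.univ.filter (fun u : PHat P => toPHat v ⋖ u), Ring.inverse (f u))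
  · rw [toggle, toggle, if_pos hc, if_pos (hiff.mpr hc)]
    simp only [Option.map_some]
    rw [h1, hsum1, hsum0, Function.update_comm hne'.symm]
  · rw [toggle, toggle, if_neg hc, if_neg (fun h => hc (hiff.mp h))]
    rfl

end Aux

/-- If `v, w ∈ P` satisfy neither `v ⋖ w` nor `w ⋖ v`, then the toggles
`T_v` and `T_w` commute: `T_v ∘ T_w = T_w ∘ T_v` as partial maps. -/
theorem stmt8 {P : Type*} [PartialOrder P] [Fintype P] {K : Type*} [Ring K]
    (v w : P) (hvw : ¬ v ⋖ w) (hwv : ¬ w ⋖ v) (f : PHat P → K) :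
    (toggle w f).bind (toggle v) = (toggle v f).bind (toggle w) := by
  by_cases hne : v = w
  · subst hne; rfl
  rcases hw : toggle w f with _ | gw
  · rcases hv : toggle v f with _ | gv
    · rfl
    · obtain ⟨y, rfl⟩ := toggle_eq_some hv
      simp only [Option.bind_none, Option.bind_some,
        toggle_update hwv hvw (Ne.symm hne) f y, hw, Option.map_none]
  · obtain ⟨x, rfl⟩ := toggle_eq_some hw
    rcases hv : toggle v f with _ | gv
    · simp only [Option.bind_some, Option.bind_none,
        toggle_update hvw hwv hne f x, hv, Option.map_none]
    · obtain ⟨y, rfl⟩ := toggle_eq_some hv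
      simp only [Option.bind_some, toggle_update hvw hwv hne f x, hv,
        toggle_update hwv hvw (Ne.symm hne) f y, hw, Option.map_some]
      rw [Function.update_comm (fun h => hne (toPHat_injective h))]
end

section
/- Let P be a finite poset, K a ring, and R the birational rowmotion partial map defined as the composition T_{v₁} ∘ T_{v₂} ∘ ⋯ ∘ T_{vₘ} for any linear extension (v₁, …, vₘ) of P. Then this composition is independent of the choice of linear extension (v₁, …, vₘ). -/
open scoped Classical


set_option linter.unusedSectionVars false

section Aux
variable {P : Type*} [PartialOrder P] [Fintype P] {K : Type*} [Ring K]

lemma toPHat_lt_iff {a b : P} : toPHat a < toPHat b ↔ a < b := by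
  simp [toPHat]

lemma toPHat_inj {a b : P} (h : toPHat a = toPHat b) : a = b := by
  simpa [toPHat] using h

/-- The definedness condition of the toggle `T_v`. -/
def Cond (v : P) (f : PHat P → K) : Prop :=
  IsUnit (f (toPHat v)) ∧ (∀ u : PHat P, toPHat v ⋖ u → IsUnit (f u)) ∧
      IsUnit (∑ u ∈ Finset.univ.filter (fun u : PHat P => toPHat v ⋖ u), Ring.inverse (f u))

/-- The new value placed at `v` by the toggle `T_v`. -/
noncomputable def Val (v : P) (f : PHat P → K) : K :=
  (∑ u ∈ Finset.univ.filter (fun u : PHat P => u ⋖ toPHat v), f u) *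
    Ring.inverse (f (toPHat v)) *
    Ring.inverse
      (∑ u ∈ Finset.univ.filter (fun u : PHat P => toPHat v ⋖ u), Ring.inverse (f u))

lemma toggle_def (v : P) (f : PHat P → K) :
    toggle v f = if Cond v f then some (Function.update f (toPHat v) (Val v f)) else none := by
  unfold toggle Cond Val
  congr

lemma cond_congr {v : P} {f g : PHat P → K}
    (h : ∀ u : PHat P, u = toPHat v ∨ toPHat v ⋖ u → f u = g u) :
    Cond v f ↔ Cond v g := by
  have h1 : f (toPHat v) = g (toPHat v) := h _ (Or.inl rfl)
  have h2 : ∀ u : PHat P, toPHat v ⋖ u → f u = g u := fun u hu => h u (Or.inr hu)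
  have h3 : (∑ u ∈ Finset.univ.filter (fun u : PHat P => toPHat v ⋖ u), Ring.inverse (f u))
      = ∑ u ∈ Finset.univ.filter (fun u : PHat P => toPHat v ⋖ u), Ring.inverse (g u) :=
    Finset.sum_congr rfl fun u hu => by
      rw [h2 u (by simpa using hu)]
  unfold Cond
  rw [h1, h3]
  constructor <;> rintro ⟨c1, c2, c3⟩
  · exact ⟨c1, fun u hu => h2 u hu ▸ c2 u hu, c3⟩
  · exact ⟨c1, fun u hu => (h2 u hu).symm ▸ c2 u hu, c3⟩

lemma val_congr {v : P} {f g : PHat P → K}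
    (h : ∀ u : PHat P, u = toPHat v ∨ toPHat v ⋖ u ∨ u ⋖ toPHat v → f u = g u) :
    Val v f = Val v g := by
  unfold Val
  rw [h _ (Or.inl rfl)]
  congr 1
  · congr 1
    exact Finset.sum_congr rfl fun u hu =>
      h u (Or.inr (Or.inr (by simpa using hu)))
  · congr 1
    exact Finset.sum_congr rfl fun u hu => by
      rw [h u (Or.inr (Or.inl (by simpa using hu)))]

lemma update_agree {a b : P} (hab : ¬ a < b) (hba : ¬ b < a) (hne : a ≠ b)
    (f : PHat P → K) (c : K) :
    ∀ u : PHat P, u = toPHat a ∨ toPHat a ⋖ u ∨ u ⋖ toPHat a →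
      Function.update f (toPHat b) c u = f u := by
  intro u hu
  apply Function.update_of_ne
  intro h
  rcases hu with rfl | hu | hu
  · exact hne (toPHat_inj h)
  · exact hab (toPHat_lt_iff.mp (h ▸ hu).lt)
  · exact hba (toPHat_lt_iff.mp (h ▸ hu).lt)

lemma toggle_comm {a b : P} (hab : ¬ a < b) (hba : ¬ b < a) (hne : a ≠ b)
    (f : PHat P → K) :
    (toggle a f).bind (toggle b) = (toggle b f).bind (toggle a) := by
  have haga : ∀ (c : K), ∀ u : PHat P, u = toPHat a ∨ toPHat a ⋖ u ∨ u ⋖ toPHat a →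
      Function.update f (toPHat b) c u = f u := update_agree hab hba hne f
  have hagb : ∀ (c : K), ∀ u : PHat P, u = toPHat b ∨ toPHat b ⋖ u ∨ u ⋖ toPHat b →
      Function.update f (toPHat a) c u = f u := update_agree hba hab hne.symm f
  have hCa : ∀ c : K, Cond a (Function.update f (toPHat b) c) ↔ Cond a f := fun c =>
    cond_congr fun u hu => haga c u (hu.imp id Or.inl)
  have hCb : ∀ c : K, Cond b (Function.update f (toPHat a) c) ↔ Cond b f := fun c =>
    cond_congr fun u hu => hagb c u (hu.imp id Or.inl)
  have hVa : ∀ c : K, Val a (Function.update f (toPHat b) c) = Val a f := fun c =>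
    val_congr (haga c)
  have hVb : ∀ c : K, Val b (Function.update f (toPHat a) c) = Val b f := fun c =>
    val_congr (hagb c)
  have htne : toPHat a ≠ toPHat b := fun h => hne (toPHat_inj h)
  by_cases ha : Cond a f <;> by_cases hb : Cond b f <;>
    simp [toggle_def, ha, hb, hCa, hCb, hVa, hVb]
  rw [Function.update_comm htne]

lemma bind_toggle_comm {a b : P} (hab : ¬ a < b) (hba : ¬ b < a) (hne : a ≠ b)
    (o : Option (PHat P → K)) :
    (o.bind (toggle a)).bind (toggle b) = (o.bind (toggle b)).bind (toggle a) := by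
  cases o with
  | none => rfl
  | some f => exact toggle_comm hab hba hne f

lemma toggleList_middle (a : P) (X Y : List P)
    (h : ∀ x ∈ X, ¬ a < x ∧ ¬ x < a ∧ a ≠ x) (f : PHat P → K) :
    toggleList (X ++ a :: Y) f = toggleList (a :: (X ++ Y)) f := by
  induction X with
  | nil => rfl
  | cons x X' ih =>
    obtain ⟨h1, h2, h3⟩ := h x List.mem_cons_self
    have ih' := ih fun y hy => h y (List.mem_cons_of_mem _ hy)
    calc toggleList ((x :: X') ++ a :: Y) f
        = (toggleList (X' ++ a :: Y) f).bind (toggle x) := rfl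
      _ = (toggleList (a :: (X' ++ Y)) f).bind (toggle x) := by rw [ih']
      _ = ((toggleList (X' ++ Y) f).bind (toggle a)).bind (toggle x) := rfl
      _ = ((toggleList (X' ++ Y) f).bind (toggle x)).bind (toggle a) :=
          bind_toggle_comm h1 h2 h3 _
      _ = toggleList (a :: ((x :: X') ++ Y)) f := rfl

lemma toggleList_perm (L₁ : List P) : ∀ L₂ : List P, List.Perm L₁ L₂ → L₁.Nodup →
    (L₁.Pairwise fun a b => ¬ b < a) → (L₂.Pairwise fun a b => ¬ b < a) →
    ∀ f : PHat P → K, toggleList L₁ f = toggleList L₂ f := by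
  induction L₁ with
  | nil =>
    intro L₂ hp _ _ _ f
    rw [← hp.nil_eq]
  | cons a T ih =>
    intro L₂ hp hnd hpw1 hpw2 f
    have ha : a ∈ L₂ := hp.subset List.mem_cons_self
    obtain ⟨X, Y, rfl⟩ := List.append_of_mem ha
    have hnd2 : (X ++ a :: Y).Nodup := hp.nodup hnd
    have haX : a ∉ X := fun hx =>
      (List.disjoint_right.mp (List.nodup_append'.mp hnd2).2.2 List.mem_cons_self) hx
    have hinc : ∀ x ∈ X, ¬ a < x ∧ ¬ x < a ∧ a ≠ x := by
      intro x hx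
      have hax : ¬ a < x :=
        (List.pairwise_append.mp hpw2).2.2 x hx a List.mem_cons_self
      have hne : a ≠ x := fun h => haX (h ▸ hx)
      have hxT : x ∈ T := by
        have : x ∈ a :: T := hp.mem_iff.mpr (List.mem_append.mpr (Or.inl hx))
        rcases List.mem_cons.mp this with h | h
        · exact absurd h.symm hne
        · exact h
      exact ⟨hax, List.rel_of_pairwise_cons hpw1 hxT, hne⟩
    rw [toggleList_middle a X Y hinc f]
    show (toggleList T f).bind (toggle a) = (toggleList (X ++ Y) f).bind (toggle a)
    have hperm : List.Perm T (X ++ Y) := (List.perm_cons a).mp (hp.trans List.perm_middle)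
    have hsub : (X ++ Y).Sublist (X ++ a :: Y) :=
      (List.Sublist.refl X).append (List.sublist_cons_self a Y)
    rw [ih (X ++ Y) hperm (List.nodup_cons.mp hnd).2 hpw1.of_cons (hpw2.sublist hsub) f]

end Aux

/-- Birational rowmotion `T_{v₁} ∘ ⋯ ∘ T_{vₘ}` does not depend on the choice
of the linear extension `(v₁, …, vₘ)` of `P`. -/
theorem stmt9 {P : Type*} [PartialOrder P] [Fintype P] {K : Type*} [Ring K]
    (L₁ L₂ : List P) (h₁ : IsLinearExtension L₁) (h₂ : IsLinearExtension L₂)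
    (f : PHat P → K) :
    toggleList L₁ f = toggleList L₂ f := by
  exact toggleList_perm L₁ L₂
    ((List.perm_ext_iff_of_nodup h₁.1 h₂.1).mpr fun v => ⟨fun _ => h₂.2.1 v, fun _ => h₁.2.1 v⟩)
    h₁.1 h₁.2.2 h₂.2.2 f
end

section
/- Let P be a finite poset, K a ring, f a K-labeling with Rf ≠ ⊥, and v ∈ P. Then f(v) is invertible in K. -/
open scoped Classical


private lemma toPHat_inj_s12 {P : Type*} : Function.Injective (toPHat (P := P)) := by
  intro a b h
  simpa [toPHat] using h

private lemma toggle_eq {P : Type*} [PartialOrder P] [Fintype P] {K : Type*} [Ring K]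
    {u : P} {f g : PHat P → K} (h : toggle u f = some g) :
    IsUnit (f (toPHat u)) ∧ ∀ w : P, w ≠ u → g (toPHat w) = f (toPHat w) := by
  unfold toggle at h
  split_ifs at h with hc
  refine ⟨hc.1, fun w hw => ?_⟩
  simp only [Option.some.injEq] at h
  subst h
  rw [Function.update_of_ne (fun he => hw (toPHat_inj_s12 he))]

private lemma key {P : Type*} [PartialOrder P] [Fintype P] {K : Type*} [Ring K] :
    ∀ (L : List P) (f g : PHat P → K), toggleList L f = some g →
      (∀ v ∈ L, IsUnit (f (toPHat v))) ∧ ∀ v ∉ L, g (toPHat v) = f (toPHat v) := by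
  intro L
  induction L with
  | nil =>
    intro f g hfg
    simp only [toggleList, Option.some.injEq] at hfg
    subst hfg
    exact ⟨by simp, fun _ _ => rfl⟩
  | cons u L' ih =>
    intro f g hfg
    simp only [toggleList, Option.bind_eq_some_iff] at hfg
    obtain ⟨h, hh, htog⟩ := hfg
    obtain ⟨ih1, ih2⟩ := ih f h hh
    obtain ⟨hu, hg⟩ := toggle_eq htog
    constructor
    · intro v hv
      by_cases hvL : v ∈ L'
      · exact ih1 v hvL
      · have hvu : v = u := by
          rcases List.mem_cons.mp hv with h' | h'
          · exact h'
          · exact absurd h' hvL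
        subst hvu
        rwa [ih2 v hvL] at hu
    · intro v hv
      have hvu : v ≠ u := fun he => hv (he ▸ List.mem_cons_self)
      have hvL : v ∉ L' := fun h' => hv (List.mem_cons_of_mem _ h')
      rw [hg v hvu, ih2 v hvL]

/-- If `R f ≠ ⊥` and `v ∈ P`, then `f(v)` is invertible in `K`. -/
theorem stmt12 {P : Type*} [PartialOrder P] [Fintype P] {K : Type*} [Ring K]
    (L : List P) (hL : IsLinearExtension L) (f g : PHat P → K)
    (hfg : toggleList L f = some g) (v : P) :
    IsUnit (f (toPHat v)) := by
  exact (key L f g hfg).1 v (hL.2.1 v)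
end

section
/- Let P be a nonempty finite poset, K a ring, and f a K-labeling with R²f ≠ ⊥. Then both f(0) and f(1) are invertible in K. -/
open scoped Classical


section Aux

set_option linter.unusedSectionVars false

variable {P : Type*} [PartialOrder P] [Fintype P] {K : Type*} [Ring K]

lemma toPHat_ne_bot (v : P) : toPHat v ≠ (⊥ : PHat P) := by
  simp [toPHat]

lemma toPHat_ne_top (v : P) : toPHat v ≠ (⊤ : PHat P) := by
  intro h
  rw [toPHat] at h
  have : ((v : WithTop P)) = (⊤ : WithTop P) := WithBot.coe_injective h
  exact (WithTop.coe_ne_top) this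

lemma toggle_isSome {v : P} {f g : PHat P → K} (h : toggle v f = some g) :
    IsUnit (f (toPHat v)) ∧ (∀ u : PHat P, toPHat v ⋖ u → IsUnit (f u)) ∧
      IsUnit (∑ u ∈ Finset.univ.filter (fun u : PHat P => toPHat v ⋖ u), Ring.inverse (f u)) ∧
      g = Function.update f (toPHat v)
        ((∑ u ∈ Finset.univ.filter (fun u : PHat P => u ⋖ toPHat v), f u) *
          Ring.inverse (f (toPHat v)) *
          Ring.inverse
            (∑ u ∈ Finset.univ.filter (fun u : PHat P => toPHat v ⋖ u), Ring.inverse (f u))) := by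
  rw [toggle] at h
  split_ifs at h with hc
  exact ⟨hc.1, hc.2.1, hc.2.2, (Option.some_injective _ h).symm⟩

lemma toggle_apply_ne {v : P} {f g : PHat P → K} (h : toggle v f = some g)
    {x : PHat P} (hx : x ≠ toPHat v) : g x = f x := by
  obtain ⟨-, -, -, rfl⟩ := toggle_isSome h
  exact Function.update_of_ne hx _ _

lemma toggleList_apply_ne {L : List P} {f g : PHat P → K} (h : toggleList L f = some g)
    {x : PHat P} (hx : ∀ v ∈ L, toPHat v ≠ x) : g x = f x := by
  induction L generalizing g with
  | nil =>
      rw [toggleList, Option.some_inj] at h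
      rw [← h]
  | cons v L ih =>
      rw [toggleList] at h
      obtain ⟨h', hh', hg⟩ := Option.bind_eq_some_iff.mp h
      rw [toggle_apply_ne hg (fun hc => hx v (by simp) hc.symm)]
      exact ih hh' (fun w hw => hx w (by simp [hw]))

lemma toggleList_append_singleton {L : List P} {v : P} {f g : PHat P → K}
    (h : toggleList (L ++ [v]) f = some g) :
    ∃ g', toggle v f = some g' ∧ toggleList L g' = some g := by
  induction L generalizing g with
  | nil =>
      rw [List.nil_append, toggleList, toggleList, Option.bind_some] at h
      exact ⟨g, h, rfl⟩
  | cons w L ih =>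
      rw [List.cons_append, toggleList] at h
      obtain ⟨h', hh', hg⟩ := Option.bind_eq_some_iff.mp h
      obtain ⟨g', hg', hL⟩ := ih hh'
      exact ⟨g', hg', by rw [toggleList, hL, Option.bind_some]; exact hg⟩

lemma covBy_top_of_maximal {v : P} (hv : ∀ w : P, ¬ v < w) : toPHat v ⋖ (⊤ : PHat P) := by
  constructor
  · exact lt_of_le_of_ne le_top (toPHat_ne_top v)
  · rintro c hc hct
    induction c using WithBot.recBotCoe with
    | bot => exact absurd hc (by simp [toPHat])
    | coe c =>
        induction c using WithTop.recTopCoe with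
        | top => exact absurd hct (lt_irrefl _)
        | coe w =>
            have : v < w := by
              have := hc
              rw [toPHat] at this
              exact_mod_cast this
            exact hv w this

lemma covBy_bot_iff_of_minimal {v : P} (hv : ∀ w : P, ¬ w < v) (u : PHat P) :
    u ⋖ toPHat v ↔ u = ⊥ := by
  constructor
  · intro hu
    induction u using WithBot.recBotCoe with
    | bot => rfl
    | coe c =>
        exfalso
        induction c using WithTop.recTopCoe with
        | top =>
            have := hu.1
            rw [toPHat] at this
            exact absurd (WithBot.coe_lt_coe.mp this) (by simp)
        | coe w =>
            have : w < v := by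
              have := hu.1
              rw [toPHat] at this
              exact_mod_cast this
            exact hv w this
  · rintro rfl
    constructor
    · exact lt_of_le_of_ne bot_le (Ne.symm (toPHat_ne_bot v))
    · rintro c hc hcv
      induction c using WithBot.recBotCoe with
      | bot => exact absurd hc (lt_irrefl _)
      | coe c =>
          induction c using WithTop.recTopCoe with
          | top =>
              have := hcv
              rw [toPHat] at this
              exact absurd (WithBot.coe_lt_coe.mp this) (by simp)
          | coe w =>
              have : w < v := by
                have := hcv
                rw [toPHat] at this
                exact_mod_cast this
              exact hv w this

lemma isUnit_of_mul_unit_right {a b : K} (hb : IsUnit b) (hab : IsUnit (a * b)) : IsUnit a := by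
  obtain ⟨u, rfl⟩ := hb
  have : a = (a * u) * ↑u⁻¹ := by
    rw [mul_assoc, Units.mul_inv, mul_one]
  rw [this]
  exact hab.mul (Units.isUnit _)

end Aux

/-- If `P ≠ ∅` and `R² f ≠ ⊥`, then `f(0)` and `f(1)` are invertible. -/
theorem stmt14 {P : Type*} [PartialOrder P] [Fintype P] [Nonempty P] {K : Type*} [Ring K]
    (L : List P) (hL : IsLinearExtension L) (f g : PHat P → K)
    (hfg : rowIter L 2 f = some g) :
    IsUnit (f ⊥) ∧ IsUnit (f ⊤) := by
  obtain ⟨hnd, hmem, hpw⟩ := hL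
  rw [rowIter] at hfg
  obtain ⟨h, hh, h1⟩ := Option.bind_eq_some_iff.mp hfg
  rw [rowIter] at h1
  obtain ⟨k, hk, -⟩ := Option.bind_eq_some_iff.mp h1
  have hLne : L ≠ [] := List.ne_nil_of_mem (hmem (Classical.arbitrary P))
  constructor
  · -- f ⊥ is a unit
    obtain ⟨v₁, L₂, rfl⟩ : ∃ v₁ L₂, L = v₁ :: L₂ := by
      cases L with
      | nil => exact absurd rfl hLne
      | cons a l => exact ⟨a, l, rfl⟩
    have hmin : ∀ w : P, ¬ w < v₁ := by
      intro w hw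
      have hwL : w ∈ v₁ :: L₂ := hmem w
      rcases List.mem_cons.mp hwL with rfl | hw2
      · exact lt_irrefl _ hw
      · exact (List.pairwise_cons.mp hpw).1 w hw2 hw
    have hnot : v₁ ∉ L₂ := (List.nodup_cons.mp hnd).1
    -- first pass
    rw [toggleList] at hh
    obtain ⟨f', hf', ht1⟩ := Option.bind_eq_some_iff.mp hh
    obtain ⟨hu1, -, hS1, hval⟩ := toggle_isSome ht1
    -- the lower covers of v₁ are exactly {⊥}
    have hfilt : Finset.univ.filter (fun u : PHat P => u ⋖ toPHat v₁) = {⊥} := by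
      ext u
      simp [covBy_bot_iff_of_minimal hmin]
    have hbot : f' ⊥ = f ⊥ :=
      toggleList_apply_ne hf' (fun w _ => toPHat_ne_bot w)
    have hhval : h (toPHat v₁) = f ⊥ * Ring.inverse (f' (toPHat v₁)) *
        Ring.inverse (∑ u ∈ Finset.univ.filter (fun u : PHat P => toPHat v₁ ⋖ u),
          Ring.inverse (f' u)) := by
      rw [hval, Function.update_self, hfilt, Finset.sum_singleton, hbot]
    -- second pass
    rw [toggleList] at hk
    obtain ⟨h', hh', ht2⟩ := Option.bind_eq_some_iff.mp hk
    obtain ⟨hu2, -, -, -⟩ := toggle_isSome ht2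
    have hh'v : h' (toPHat v₁) = h (toPHat v₁) :=
      toggleList_apply_ne hh' (fun w hw hweq =>
        hnot (by rwa [toPHat_injective hweq] at hw))
    rw [hh'v, hhval] at hu2
    exact isUnit_of_mul_unit_right (isUnit_ringInverse.mpr hu1)
      (isUnit_of_mul_unit_right (isUnit_ringInverse.mpr hS1) hu2)
  · -- f ⊤ is a unit
    set vm := L.getLast hLne with hvm
    have hsplit : L.dropLast ++ [vm] = L := List.dropLast_append_getLast hLne
    have hmax : ∀ w : P, ¬ vm < w := by
      intro w hw
      have hwL : w ∈ L := hmem w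
      rw [← hsplit] at hwL
      rcases List.mem_append.mp hwL with hw1 | hw2
      · rw [← hsplit] at hpw
        exact (List.pairwise_append.mp hpw).2.2 w hw1 vm (by simp) hw
      · simp at hw2
        subst hw2
        exact lt_irrefl _ hw
    rw [← hsplit] at hh
    obtain ⟨g', hg', -⟩ := toggleList_append_singleton hh
    obtain ⟨-, hcov, -, -⟩ := toggle_isSome hg'
    exact hcov ⊤ (covBy_top_of_maximal hmax)
end
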